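/- arXiv:1004.2461 — 2 statements merged into one kernel-verified Lean document; each statement's English description precedes it below -/
import Mathlib

section
/- Let p, q be positive integers with q < p. Define a_{p,q} = 1/2 - (p^2 - 3q^2)/(4p^3) * sqrt(4p^2 - 3q^2). Then 0 < a_{p,q} < 1. -/
/-- For positive integers `q < p`, the constant
`a_{p,q} = 1/2 - (p² - 3q²)/(4p³) · √(4p² - 3q²)` lies in `(0,1)`. -/
theorem stmt_0 (p q : ℕ) (hq : 0 < q) (hpq : q < p) :
    0 < (1/2 : ℝ) - ((p : ℝ)^2 - 3*(q : ℝ)^2)/(4*(p : ℝ)^3) *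
        Real.sqrt (4*(p : ℝ)^2 - 3*(q : ℝ)^2) ∧
    (1/2 : ℝ) - ((p : ℝ)^2 - 3*(q : ℝ)^2)/(4*(p : ℝ)^3) *
        Real.sqrt (4*(p : ℝ)^2 - 3*(q : ℝ)^2) < 1 := by
  have hp : (0:ℝ) < p := by exact_mod_cast hq.trans hpq
  have hq' : (0:ℝ) < q := by exact_mod_cast hq
  have hqp : (q:ℝ) < p := by exact_mod_cast hpq
  set A : ℝ := ((p : ℝ)^2 - 3*(q : ℝ)^2)/(4*(p : ℝ)^3) with hA
  set B : ℝ := 4*(p : ℝ)^2 - 3*(q : ℝ)^2 with hB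
  have hBpos : 0 < B := by nlinarith
  have hsq : (Real.sqrt B)^2 = B := Real.sq_sqrt hBpos.le
  have hkey : (A * Real.sqrt B)^2 < (1/2)^2 := by
    have h4 : (0:ℝ) < 16 * (p:ℝ)^6 := by positivity
    have : (A * Real.sqrt B)^2 = ((p : ℝ)^2 - 3*(q : ℝ)^2)^2 * B / (16 * (p:ℝ)^6) := by
      rw [mul_pow, hsq, hA]; field_simp; ring_nf
    rw [this, div_lt_iff₀ h4, hB]
    nlinarith [mul_pos (pow_pos hq' 2) (pow_pos (show (0:ℝ) < (p:ℝ)^2 - (q:ℝ)^2 by nlinarith) 2)]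
  constructor <;>
    nlinarith [hkey, sq_nonneg (A * Real.sqrt B + 1/2), sq_nonneg (A * Real.sqrt B - 1/2)]
end

section
/- Let w_0, ..., w_n and d be positive real numbers with |w| := w_0 + ... + w_n satisfying d < |w|, and set w := w_0 * w_1 * ... * w_n. If d * (|w| - d)^n > w * n^n, then |w| - d > n * min_i w_i. -/
lemma aux_prod_3 {ι : Type*} (s : Finset ι) (t : ℝ) (ht : 0 ≤ t) (a : ι → ℝ)
    (ha : ∀ i ∈ s, 0 ≤ a i) :
    (t + ∑ i ∈ s, a i) * t ^ s.card ≤ (∏ i ∈ s, (t + a i)) * t := by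
  induction s using Finset.cons_induction with
  | empty => simp
  | cons j s hj ih =>
    have haj : 0 ≤ a j := ha j (Finset.mem_cons_self j s)
    have ha' : ∀ i ∈ s, 0 ≤ a i := fun i hi => ha i (Finset.mem_cons_of_mem hi)
    have hsum : 0 ≤ ∑ i ∈ s, a i := Finset.sum_nonneg ha'
    rw [Finset.sum_cons, Finset.prod_cons, Finset.card_cons]
    have key : (t + (a j + ∑ i ∈ s, a i)) * t ≤ (t + a j) * (t + ∑ i ∈ s, a i) := by
      nlinarith
    calc (t + (a j + ∑ i ∈ s, a i)) * t ^ (s.card + 1)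
        = ((t + (a j + ∑ i ∈ s, a i)) * t) * t ^ s.card := by ring
      _ ≤ ((t + a j) * (t + ∑ i ∈ s, a i)) * t ^ s.card :=
          mul_le_mul_of_nonneg_right key (pow_nonneg ht _)
      _ = (t + a j) * ((t + ∑ i ∈ s, a i) * t ^ s.card) := by ring
      _ ≤ (t + a j) * ((∏ i ∈ s, (t + a i)) * t) :=
          mul_le_mul_of_nonneg_left (ih ha') (by linarith)
      _ = (t + a j) * (∏ i ∈ s, (t + a i)) * t := by ring

/-- Bishop obstruction implies Lichnerowicz obstruction for weighted homogeneous
hypersurface singularities: if `w₀,…,wₙ, d > 0` with `d < |w| = ∑ wᵢ` and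
`d(|w| - d)ⁿ > (∏ wᵢ) nⁿ`, then `|w| - d > n · min_i wᵢ`. -/
theorem stmt_3 (n : ℕ) (hn : 1 ≤ n) (w : Fin (n+1) → ℝ) (hw : ∀ i, 0 < w i)
    (d : ℝ) (hd : 0 < d) (hdlt : d < ∑ i, w i)
    (hbishop : d * ((∑ i, w i) - d)^n > (∏ i, w i) * (n : ℝ)^n) :
    (∑ i, w i) - d > (n : ℝ) * Finset.univ.inf' Finset.univ_nonempty w := by
  by_contra h
  push_neg at h
  set S := ∑ i, w i with hS
  set m := Finset.univ.inf' Finset.univ_nonempty w with hm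
  have hn0 : (0 : ℝ) < n := by exact_mod_cast hn
  set t := (S - d) / n with ht
  have htpos : 0 < t := div_pos (by linarith) hn0
  have hnt : (n : ℝ) * t = S - d := by rw [ht]; field_simp
  have htm : t ≤ m := by
    rw [ht, div_le_iff₀ hn0]
    linarith [mul_comm m (n : ℝ)]
  have hti : ∀ i, t ≤ w i := fun i =>
    le_trans htm (Finset.inf'_le w (Finset.mem_univ i))
  have key := aux_prod_3 (Finset.univ : Finset (Fin (n+1))) t htpos.le
    (fun i => w i - t) (fun i _ => by simpa using sub_nonneg.mpr (hti i))
  simp only [Finset.card_univ, Fintype.card_fin] at key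
  have hsum : ∑ i, (w i - t) = S - (n + 1) * t := by
    rw [Finset.sum_sub_distrib, Finset.sum_const, Finset.card_univ,
      Fintype.card_fin, nsmul_eq_mul, ← hS]
    push_cast
    ring
  have hprod : ∏ i, (t + (w i - t)) = ∏ i, w i := by
    apply Finset.prod_congr rfl; intro i _; ring
  rw [hsum, hprod] at key
  have hlhs : t + (S - (n + 1) * t) = d := by
    push_cast at hnt ⊢
    linarith
  rw [hlhs] at key
  -- key : d * t ^ (n + 1) ≤ (∏ i, w i) * t
  have key2 : d * t ^ n ≤ ∏ i, w i := by
    have := (mul_le_mul_iff_of_pos_right htpos).mp (by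
      calc (d * t ^ n) * t = d * t ^ (n + 1) := by ring
        _ ≤ (∏ i, w i) * t := key)
    exact this
  have hfin : d * (S - d) ^ n ≤ (∏ i, w i) * (n : ℝ) ^ n := by
    have : (S - d) ^ n = t ^ n * (n : ℝ) ^ n := by
      rw [← hnt, mul_pow]; ring
    rw [this, ← mul_assoc]
    exact mul_le_mul_of_nonneg_right key2 (pow_nonneg hn0.le n)
  linarith [hbishop]
end
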